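/- arXiv:1907.10724 — 2 statements merged into one kernel-verified Lean document; each statement's English description precedes it below -/
import Mathlib

section
/- Let r, s, L be nonnegative integers with s ≥ 1 and L ≥ 2s + r + 1, and let C be an (L,s,r) PPRIC code. Then the family { [L] \ supp(c) : c ∈ C } of complements of supports of codewords of C is an (L, L−s, r+2) covering design; that is, each set [L] \ supp(c) has L−s elements and every (r+2)-element subset of [L] is contained in [L] \ supp(c) for at least one c ∈ C. -/
/-- The Hamming ball of radius `ρ` centered at `x` in `𝔽₂^L`. -/
def pball (L : ℕ) (x : Fin L → ZMod 2) (ρ : ℕ) : Set (Fin L → ZMod 2) :=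
  {y | hammingDist x y ≤ ρ}

/-- `C` is an `(L,s,r)` PPRIC code: a set of words of Hamming weight exactly `s`
such that `B(0,r) = ⋂_{c ∈ C} B(c, r+s)`. -/
def IsPPRIC (L s r : ℕ) (C : Set (Fin L → ZMod 2)) : Prop :=
  (∀ c ∈ C, hammingNorm c = s) ∧
  pball L 0 r = ⋂ c ∈ C, pball L c (r + s)

/-- The support of a word, as a finset of coordinates. -/
def psupp (L : ℕ) (v : Fin L → ZMod 2) : Finset (Fin L) :=
  Finset.univ.filter (fun i => v i ≠ 0)

lemma zmod2_ne_zero_eq_one : ∀ a : ZMod 2, a ≠ 0 → a = 1 := by decide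

theorem stmt4 (L r s : ℕ) (hs : 1 ≤ s) (hL : 2 * s + r + 1 ≤ L)
    (C : Set (Fin L → ZMod 2)) (hC : IsPPRIC L s r C) :
    (∀ c ∈ C, ((psupp L c)ᶜ).card = L - s) ∧
    (∀ T : Finset (Fin L), T.card = r + 2 → ∃ c ∈ C, T ⊆ (psupp L c)ᶜ) := by
  obtain ⟨hw, hball⟩ := hC
  have hsupp : ∀ c ∈ C, (psupp L c).card = s := by
    intro c hc
    have := hw c hc
    simpa [psupp, hammingNorm] using this
  constructor
  · intro c hc
    rw [Finset.card_compl, hsupp c hc]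
    simp
  · intro T hT
    set y : Fin L → ZMod 2 := fun i => if i ∈ T then 1 else 0 with hy
    have hyT : ∀ i, y i ≠ 0 ↔ i ∈ T := by
      intro i; by_cases h : i ∈ T <;> simp [hy, h]
    have hynot : y ∉ pball L 0 r := by
      simp only [pball, Set.mem_setOf_eq, not_le]
      have hd : hammingDist (0 : Fin L → ZMod 2) y = T.card := by
        show (Finset.univ.filter fun i => (0 : ZMod 2) ≠ y i).card = T.card
        have : (Finset.univ.filter fun i => (0 : ZMod 2) ≠ y i) = T := by
          ext i
          simp only [Finset.mem_filter, Finset.mem_univ, true_and]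
          rw [← hyT i]
          exact ne_comm
        rw [this]
      omega
    rw [hball] at hynot
    rw [Set.mem_iInter₂] at hynot
    push_neg at hynot
    obtain ⟨c, hcC, hcd⟩ := hynot
    have hcd' : r + s < hammingDist c y := by
      simpa [pball, not_le] using hcd
    refine ⟨c, hcC, ?_⟩
    intro i hiT
    rw [Finset.mem_compl]
    by_contra hic
    -- i ∈ psupp c ∩ T, derive contradiction
    have hA : (psupp L c).card = s := hsupp c hcC
    have hsub : (Finset.univ.filter fun j => c j ≠ y j) ⊆
        (psupp L c ∪ T) \ (psupp L c ∩ T) := by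
      intro j hj
      rw [Finset.mem_filter] at hj
      have hj' := hj.2
      simp only [Finset.mem_sdiff, Finset.mem_union, Finset.mem_inter]
      by_cases hc0 : c j = 0
      · have hyj : j ∈ T := by
          rw [← hyT j]
          intro h0
          exact hj' (by rw [hc0, h0])
        have : j ∉ psupp L c := by simp [psupp, hc0]
        exact ⟨Or.inr hyj, fun h => this h.1⟩
      · have hjp : j ∈ psupp L c := by simp [psupp, hc0]
        have hjT : j ∉ T := by
          intro hjT
          have : y j = 1 := by simp [hy, hjT]
          exact hj' (by rw [this, zmod2_ne_zero_eq_one _ hc0])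
        exact ⟨Or.inl hjp, fun h => hjT h.2⟩
    have hcard1 : 1 ≤ (psupp L c ∩ T).card := by
      refine Finset.card_pos.mpr ⟨i, ?_⟩
      exact Finset.mem_inter.mpr ⟨hic, hiT⟩
    have hcle : hammingDist c y ≤ ((psupp L c ∪ T) \ (psupp L c ∩ T)).card :=
      Finset.card_le_card hsub
    have hsd : ((psupp L c ∪ T) \ (psupp L c ∩ T)).card =
        (psupp L c ∪ T).card - (psupp L c ∩ T).card := by
      apply Finset.card_sdiff_of_subset
      exact (Finset.inter_subset_left).trans Finset.subset_union_left
    have hun : (psupp L c ∪ T).card + (psupp L c ∩ T).card =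
        (psupp L c).card + T.card := Finset.card_union_add_card_inter _ _
    omega
end

section
/- Let r, s, L be nonnegative integers with s ≥ 1 and L ≥ 2s + r + 1. Then for every (L,s,r) PPRIC code C, |C| ≥ c(L, L−s, r+2), where c(L, L−s, r+2) denotes the minimum number of blocks in an (L, L−s, r+2) covering design. -/
/-- `S` is an `(n,k,t)` covering design: a collection of `k`-element blocks of an
`n`-set such that every `t`-element subset is contained in at least one block. -/
def IsCoveringDesign (n k t : ℕ) (S : Finset (Finset (Fin n))) : Prop :=
  (∀ B ∈ S, B.card = k) ∧
  ∀ T : Finset (Fin n), T.card = t → ∃ B ∈ S, T ⊆ B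

lemma zmod2_cases (a : ZMod 2) : a = 0 ∨ a = 1 := by revert a; decide

theorem stmt5 (L r s : ℕ) (hs : 1 ≤ s) (hL : 2 * s + r + 1 ≤ L)
    (C : Finset (Fin L → ZMod 2)) (hC : IsPPRIC L s r ↑C) :
    sInf {m : ℕ | ∃ S : Finset (Finset (Fin L)),
        IsCoveringDesign L (L - s) (r + 2) S ∧ S.card = m} ≤ C.card := by
  obtain ⟨hw, hball⟩ := hC
  -- support of a word, as a Finset
  set supp : (Fin L → ZMod 2) → Finset (Fin L) :=
    fun c => Finset.univ.filter (fun i => c i ≠ 0) with hsupp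
  have hsuppcard : ∀ c ∈ C, (supp c).card = s := fun c hc => hw c hc
  -- key combinatorial fact
  have key : ∀ T : Finset (Fin L), T.card = r + 2 → ∃ c ∈ C, ∀ i ∈ T, c i = 0 := by
    intro T hT
    set y : Fin L → ZMod 2 := fun i => if i ∈ T then 1 else 0 with hy
    have hyT : Finset.univ.filter (fun i => y i ≠ 0) = T := by
      ext i; simp [hy]
    have hyn : hammingNorm y = r + 2 := by
      rw [← hT]; unfold hammingNorm; rw [show ({i | y i ≠ 0} : Finset (Fin L)) =
        Finset.univ.filter (fun i => y i ≠ 0) from rfl, hyT]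
    have hyr : y ∉ pball L 0 r := by
      simp only [pball, Set.mem_setOf_eq, hammingDist_zero_left, hyn]
      omega
    rw [hball] at hyr
    simp only [Set.mem_iInter, not_forall] at hyr
    obtain ⟨c, hcC, hcy⟩ := hyr
    refine ⟨c, hcC, ?_⟩
    by_contra h
    push_neg at h
    obtain ⟨i0, hi0T, hi0⟩ := h
    apply hcy
    -- show hammingDist c y ≤ r + s
    have hsub : ({i | c i ≠ y i} : Finset (Fin L)) ⊆ (supp c ∪ T) \ (supp c ∩ T) := by
      intro i hi
      simp only [Finset.mem_filter, Finset.mem_univ, true_and] at hi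
      simp only [Finset.mem_sdiff, Finset.mem_union, Finset.mem_inter, hsupp,
        Finset.mem_filter, Finset.mem_univ, true_and]
      constructor
      · by_contra hcon
        push_neg at hcon
        exact hi (by simp [hy, hcon.2, hcon.1])
      · rintro ⟨h1, h2⟩
        rcases zmod2_cases (c i) with h | h
        · exact h1 h
        · exact hi (by simp [hy, h2, h])
    have hi0m : i0 ∈ supp c ∩ T := by
      simp [hsupp, hi0T, hi0]
    have hinter : 1 ≤ (supp c ∩ T).card := Finset.card_pos.mpr ⟨i0, hi0m⟩
    have hcardle : hammingDist c y ≤ ((supp c ∪ T) \ (supp c ∩ T)).card :=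
      Finset.card_le_card hsub
    rw [Finset.card_sdiff_of_subset (Finset.inter_subset_union)] at hcardle
    have huni : (supp c ∪ T).card + (supp c ∩ T).card = (supp c).card + T.card :=
      Finset.card_union_add_card_inter _ _
    have hsc := hsuppcard c hcC
    simp only [pball, Set.mem_setOf_eq]
    omega
  -- the covering design
  set S : Finset (Finset (Fin L)) := C.image (fun c => (supp c)ᶜ) with hS
  have hdesign : IsCoveringDesign L (L - s) (r + 2) S := by
    constructor
    · intro B hB
      simp only [hS, Finset.mem_image] at hB
      obtain ⟨c, hc, rfl⟩ := hB
      rw [Finset.card_compl, hsuppcard c hc, Fintype.card_fin]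
    · intro T hT
      obtain ⟨c, hc, hzero⟩ := key T hT
      refine ⟨(supp c)ᶜ, Finset.mem_image_of_mem _ hc, ?_⟩
      intro i hi
      simp [hsupp, hzero i hi]
  have hcard : S.card = C.card := by
    rw [hS]
    apply Finset.card_image_of_injOn
    intro a ha b hb hab
    have hab' : supp a = supp b := by
      have := congrArg (·ᶜ) hab
      simpa using this
    funext i
    have : (a i ≠ 0) ↔ (b i ≠ 0) := by
      constructor <;> intro h
      · have : i ∈ supp a := by simp [hsupp, h]
        rw [hab'] at this; simpa [hsupp] using this
      · have : i ∈ supp b := by simp [hsupp, h]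
        rw [← hab'] at this; simpa [hsupp] using this
    rcases zmod2_cases (a i) with h | h <;> rcases zmod2_cases (b i) with h' | h' <;>
      simp_all
  exact Nat.sInf_le ⟨S, hdesign, hcard⟩
end
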